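/- Let n ≥ 2 and consider the pair n₁ = n−1, n₂ = n. Let S be the following finite set of ℝ-linear endomorphisms of B = ℝ[x₁,…,xₙ,y₁,…,yₙ]: f ↦ −x_i·∂f/∂x_r − y_i·∂f/∂y_r for 1 ≤ i < r ≤ n−1, and f ↦ −x_i·xₙ·f − y_i·∂f/∂yₙ for 1 ≤ i ≤ n−1. Let m₁, m₂ ∈ ℕ with m₂ ≤ m₁, set v = x_{n−1}^{m₁}·yₙ^{m₂}, and for k ∈ ℕ let W_k be the ℝ-linear span of all polynomials T₁(T₂(⋯T_j(v)⋯)) with 0 ≤ j ≤ k and T₁,…,T_j ∈ S. Then there exist real constants c₁, c₂ > 0 and K ∈ ℕ such that c₁·k^{n−1} ≤ dim W_k ≤ c₂·k^{n−1} for all k ≥ K. -/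

import Mathlib

open MvPolynomial

/-- Multiplication by a polynomial, as an ℝ-linear endomorphism. -/
noncomputable def mulE {σ : Type} (a : MvPolynomial σ ℝ) :
    Module.End ℝ (MvPolynomial σ ℝ) := LinearMap.mulLeft ℝ a

/-- Formal partial derivative ∂/∂v, as an ℝ-linear endomorphism. -/
noncomputable def pdE {σ : Type} [DecidableEq σ] (v : σ) :
    Module.End ℝ (MvPolynomial σ ℝ) := (pderiv v).toLinearMap

/-- The set S of negative-root-vector endomorphisms for the pair (n₁, n₂) = (n−1, n)
(x's are `Sum.inl`, y's `Sum.inr`, 0-based indexing: 1 ≤ i < r ≤ n−1 becomes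
i < r, r.val < n−1; the variable xₙ (resp. yₙ) is the `Fin n` element with value n−1). -/
def Sset (n : ℕ) (h : 2 ≤ n) : Set (Module.End ℝ (MvPolynomial (Fin n ⊕ Fin n) ℝ)) :=
  {T | (∃ i r : Fin n, i < r ∧ r.val < n - 1 ∧
          T = -(mulE (X (Sum.inl i)) * pdE (Sum.inl r))
                - mulE (X (Sum.inr i)) * pdE (Sum.inr r)) ∨
       (∃ i : Fin n, i.val < n - 1 ∧
          T = -mulE (X (Sum.inl i) * X (Sum.inl (⟨n - 1, by omega⟩ : Fin n)))
                - mulE (X (Sum.inr i)) * pdE (Sum.inr (⟨n - 1, by omega⟩ : Fin n)))}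

/-- W_k: span of all T₁(T₂(⋯T_j(v)⋯)) with 0 ≤ j ≤ k, T's in S. -/
noncomputable def Wk (n : ℕ) (S : Set (Module.End ℝ (MvPolynomial (Fin n ⊕ Fin n) ℝ)))
    (v : MvPolynomial (Fin n ⊕ Fin n) ℝ) (k : ℕ) :
    Submodule ℝ (MvPolynomial (Fin n ⊕ Fin n) ℝ) :=
  Submodule.span ℝ
    {f | ∃ l : List (Module.End ℝ (MvPolynomial (Fin n ⊕ Fin n) ℝ)),
      l.length ≤ k ∧ (∀ T ∈ l, T ∈ S) ∧ f = l.prod v}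

namespace Stmt12

abbrev PR (n : ℕ) := MvPolynomial (Fin n ⊕ Fin n) ℝ

def xs (n : ℕ) (d : (Fin n ⊕ Fin n) →₀ ℕ) : ℕ :=
  ∑ i ∈ Finset.univ.filter (fun i : Fin n => (i : ℕ) < n - 1), d (Sum.inl i)

def yd (n : ℕ) (d : (Fin n ⊕ Fin n) →₀ ℕ) : ℕ := ∑ i : Fin n, d (Sum.inr i)

lemma xs_add (n : ℕ) (d e : (Fin n ⊕ Fin n) →₀ ℕ) : xs n (d + e) = xs n d + xs n e := by
  simp [xs, Finset.sum_add_distrib]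

lemma yd_add (n : ℕ) (d e : (Fin n ⊕ Fin n) →₀ ℕ) : yd n (d + e) = yd n d + yd n e := by
  simp [yd, Finset.sum_add_distrib]

lemma xs_single_inl (n : ℕ) (j : Fin n) (c : ℕ) :
    xs n (Finsupp.single (Sum.inl j) c) = if (j : ℕ) < n - 1 then c else 0 := by
  classical
  simp only [xs, Finsupp.single_apply, Sum.inl.injEq]
  rw [Finset.sum_ite_eq]
  simp

lemma xs_single_inr (n : ℕ) (j : Fin n) (c : ℕ) :
    xs n (Finsupp.single (Sum.inr j) c) = 0 := by
  simp [xs, Finsupp.single_apply]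

lemma yd_single_inl (n : ℕ) (j : Fin n) (c : ℕ) :
    yd n (Finsupp.single (Sum.inl j) c) = 0 := by
  simp [yd, Finsupp.single_apply]

lemma yd_single_inr (n : ℕ) (j : Fin n) (c : ℕ) :
    yd n (Finsupp.single (Sum.inr j) c) = c := by
  classical
  simp only [yd, Finsupp.single_apply, Sum.inr.injEq]
  rw [Finset.sum_ite_eq]
  simp

lemma decomp {σ : Type} [DecidableEq σ] (d : σ →₀ ℕ) (a : σ) (h : d a ≠ 0) :
    (d - Finsupp.single a 1) + Finsupp.single a 1 = d := by
  ext b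
  rcases eq_or_ne b a with rfl | hb
  · simp only [Finsupp.add_apply, Finsupp.tsub_apply, Finsupp.single_eq_same]
    omega
  · simp [Finsupp.tsub_apply, Finsupp.single_eq_of_ne' (Ne.symm hb)]

lemma X_mul_mono {σ : Type} (i : σ) (s : σ →₀ ℕ) (a : ℝ) :
    X i * monomial s a = monomial (Finsupp.single i 1 + s) a := by
  rw [X, monomial_mul, one_mul]

lemma coord_le_xs (n : ℕ) (d : (Fin n ⊕ Fin n) →₀ ℕ) (j : Fin n) (hj : (j : ℕ) < n - 1) :
    d (Sum.inl j) ≤ xs n d := by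
  apply Finset.single_le_sum (f := fun i : Fin n => d (Sum.inl i))
  · intro i _; exact Nat.zero_le _
  · simp [hj]

lemma coord_le_yd (n : ℕ) (d : (Fin n ⊕ Fin n) →₀ ℕ) (j : Fin n) :
    d (Sum.inr j) ≤ yd n d := by
  apply Finset.single_le_sum (f := fun i : Fin n => d (Sum.inr i))
  · intro i _; exact Nat.zero_le _
  · simp


def lastI (n : ℕ) (hn : 2 ≤ n) : Fin n := ⟨n - 1, by omega⟩

def Good (n m₁ m₂ : ℕ) (hn : 2 ≤ n) (k : ℕ) (d : (Fin n ⊕ Fin n) →₀ ℕ) : Prop :=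
  yd n d = m₂ ∧ xs n d = m₁ + d (Sum.inl (lastI n hn)) ∧ d (Sum.inl (lastI n hn)) ≤ k

noncomputable def GV (n m₁ m₂ : ℕ) (hn : 2 ≤ n) (k : ℕ) : Submodule ℝ (PR n) :=
  Submodule.span ℝ {p | ∃ d, Good n m₁ m₂ hn k d ∧ p = monomial d 1}

lemma mono_mem {n m₁ m₂ k : ℕ} {hn : 2 ≤ n} {d : (Fin n ⊕ Fin n) →₀ ℕ}
    (h : Good n m₁ m₂ hn k d) (c : ℝ) : monomial d c ∈ GV n m₁ m₂ hn k := by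
  have h1 : monomial d (1 : ℝ) ∈ GV n m₁ m₂ hn k := Submodule.subset_span ⟨d, h, rfl⟩
  have := (GV n m₁ m₂ hn k).smul_mem c h1
  simpa [MvPolynomial.smul_monomial] using this

lemma GV_mono (n m₁ m₂ : ℕ) (hn : 2 ≤ n) {k k' : ℕ} (hk : k ≤ k') :
    GV n m₁ m₂ hn k ≤ GV n m₁ m₂ hn k' := by
  apply Submodule.span_mono
  rintro p ⟨d, ⟨h1, h2, h3⟩, rfl⟩
  exact ⟨d, ⟨h1, h2, h3.trans hk⟩, rfl⟩

lemma step (n m₁ m₂ : ℕ) (hn : 2 ≤ n) (k : ℕ) (T : Module.End ℝ (PR n))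
    (hT : T ∈ Sset n hn) :
    ∀ p ∈ GV n m₁ m₂ hn k, T p ∈ GV n m₁ m₂ hn (k + 1) := by
  intro p hp
  induction hp using Submodule.span_induction with
  | zero => simpa using Submodule.zero_mem _
  | add x y hx hy ihx ihy => simpa using Submodule.add_mem _ ihx ihy
  | smul c x hx ihx => simpa using Submodule.smul_mem _ c ihx
  | mem x hx =>
    obtain ⟨d, hd, rfl⟩ := hx
    obtain ⟨hyd, hrel, hlast⟩ := hd
    rcases hT with ⟨i, r, hir, hr, rfl⟩ | ⟨i, hi, rfl⟩
    · -- type A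
      have hTx : ((-(mulE (X (Sum.inl i)) * pdE (Sum.inl r))
            - mulE (X (Sum.inr i)) * pdE (Sum.inr r) : Module.End ℝ (PR n))) (monomial d 1)
          = -(X (Sum.inl i) * pderiv (Sum.inl r) (monomial d 1))
            - X (Sum.inr i) * pderiv (Sum.inr r) (monomial d 1) := by
        simp [mulE, pdE, Module.End.mul_apply]
      rw [hTx]
      have hi' : (i : ℕ) < n - 1 := lt_trans hir hr
      apply Submodule.sub_mem _ (Submodule.neg_mem _ _) _
      · -- x-term
        rw [pderiv_monomial, one_mul, X_mul_mono]
        by_cases hc : d (Sum.inl r) = 0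
        · simp [hc]
        · apply mono_mem
          set d' := d - Finsupp.single (Sum.inl r) 1 with hd'
          have hdec : d' + Finsupp.single (Sum.inl r) 1 = d := decomp d _ hc
          have hydd : yd n d' + 0 = m₂ := by
            rw [← yd_single_inl n r 1, ← yd_add, hdec, hyd]
          have hxsd : xs n d' + 1 = xs n d := by
            rw [← congrArg (xs n) hdec, xs_add, xs_single_inl]
            simp [hr]
          have hlv : d' (Sum.inl (lastI n hn)) = d (Sum.inl (lastI n hn)) := by
            rw [← hdec]
            have : Sum.inl (α := Fin n) (β := Fin n) (lastI n hn) ≠ Sum.inl r := by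
              simp only [ne_eq, Sum.inl.injEq]
              intro h
              rw [← h] at hr
              simp [lastI] at hr
            simp [Finsupp.single_eq_of_ne' (Ne.symm this)]
          refine ⟨?_, ?_, ?_⟩
          · rw [yd_add, yd_single_inl]; omega
          · rw [xs_add, xs_single_inl]
            simp only [hi', if_true]
            have h1 : Sum.inl (α := Fin n) (β := Fin n) (lastI n hn) ≠ Sum.inl i := by
              simp only [ne_eq, Sum.inl.injEq]
              intro h
              rw [← h] at hi'
              simp [lastI] at hi'
            rw [Finsupp.add_apply, Finsupp.single_eq_of_ne' (Ne.symm h1)]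
            omega
          · have h1 : Sum.inl (α := Fin n) (β := Fin n) (lastI n hn) ≠ Sum.inl i := by
              simp only [ne_eq, Sum.inl.injEq]
              intro h
              rw [← h] at hi'
              simp [lastI] at hi'
            rw [Finsupp.add_apply, Finsupp.single_eq_of_ne' (Ne.symm h1)]
            omega
      · -- y-term
        rw [pderiv_monomial, one_mul, X_mul_mono]
        by_cases hc : d (Sum.inr r) = 0
        · simp [hc]
        · apply mono_mem
          set d' := d - Finsupp.single (Sum.inr r) 1 with hd'
          have hdec : d' + Finsupp.single (Sum.inr r) 1 = d := decomp d _ hc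
          have hydd : yd n d' + 1 = m₂ := by
            rw [← yd_single_inr n r 1, ← yd_add, hdec, hyd]
          have hxsd : xs n d' + 0 = xs n d := by
            rw [← xs_single_inr n r 1, ← xs_add, hdec]
          have hlv : d' (Sum.inl (lastI n hn)) = d (Sum.inl (lastI n hn)) := by
            rw [← hdec]
            simp [Finsupp.add_apply, Finsupp.single_apply]
          refine ⟨?_, ?_, ?_⟩
          · rw [yd_add, yd_single_inr]; omega
          · rw [xs_add, xs_single_inr, Finsupp.add_apply,
              Finsupp.single_eq_of_ne (by simp)]
            omega
          · rw [Finsupp.add_apply, Finsupp.single_eq_of_ne (by simp)]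
            omega
    · -- type B
      have hTx : ((-mulE (X (Sum.inl i) * X (Sum.inl (⟨n - 1, by omega⟩ : Fin n)))
            - mulE (X (Sum.inr i)) * pdE (Sum.inr (⟨n - 1, by omega⟩ : Fin n)) : Module.End ℝ (PR n))) (monomial d 1)
          = -(X (Sum.inl i) * (X (Sum.inl (lastI n hn)) * monomial d 1))
            - X (Sum.inr i) * pderiv (Sum.inr (lastI n hn)) (monomial d 1) := by
        simp [mulE, pdE, Module.End.mul_apply, lastI, mul_assoc]
      rw [hTx]
      apply Submodule.sub_mem _ (Submodule.neg_mem _ _) _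
      · -- multiplication term
        rw [X_mul_mono, X_mul_mono]
        apply mono_mem
        have h1 : Sum.inl (α := Fin n) (β := Fin n) (lastI n hn) ≠ Sum.inl i := by
          simp only [ne_eq, Sum.inl.injEq]
          intro h
          rw [← h] at hi
          simp [lastI] at hi
        refine ⟨?_, ?_, ?_⟩
        · rw [yd_add, yd_add, yd_single_inl, yd_single_inl]; omega
        · rw [xs_add, xs_add, xs_single_inl, xs_single_inl]
          rw [Finsupp.add_apply, Finsupp.add_apply,
            Finsupp.single_eq_of_ne' (Ne.symm h1), Finsupp.single_eq_same]
          have hl2 : ¬ ((lastI n hn : Fin n) : ℕ) < n - 1 := by simp [lastI]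
          rw [if_pos hi, if_neg hl2]
          omega
        · rw [Finsupp.add_apply, Finsupp.add_apply,
            Finsupp.single_eq_of_ne' (Ne.symm h1), Finsupp.single_eq_same]
          omega
      · -- y-term
        rw [pderiv_monomial, one_mul, X_mul_mono]
        by_cases hc : d (Sum.inr (lastI n hn)) = 0
        · simp [hc]
        · apply mono_mem
          set d' := d - Finsupp.single (Sum.inr (lastI n hn)) 1 with hd'
          have hdec : d' + Finsupp.single (Sum.inr (lastI n hn)) 1 = d := decomp d _ hc
          have hydd : yd n d' + 1 = m₂ := by
            rw [← yd_single_inr n (lastI n hn) 1, ← yd_add, hdec, hyd]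
          have hxsd : xs n d' + 0 = xs n d := by
            rw [← xs_single_inr n (lastI n hn) 1, ← xs_add, hdec]
          have hlv : d' (Sum.inl (lastI n hn)) = d (Sum.inl (lastI n hn)) := by
            rw [← hdec]
            simp [Finsupp.add_apply, Finsupp.single_apply]
          refine ⟨?_, ?_, ?_⟩
          · rw [yd_add, yd_single_inr]; omega
          · rw [xs_add, xs_single_inr, Finsupp.add_apply,
              Finsupp.single_eq_of_ne (by simp)]
            omega
          · rw [Finsupp.add_apply, Finsupp.single_eq_of_ne (by simp)]
            omega


lemma gen_mem (n m₁ m₂ : ℕ) (hn : 2 ≤ n) (l : List (Module.End ℝ (PR n)))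
    (hl : ∀ T ∈ l, T ∈ Sset n hn) (k : ℕ) (p : PR n) (hp : p ∈ GV n m₁ m₂ hn k) :
    l.prod p ∈ GV n m₁ m₂ hn (k + l.length) := by
  induction l with
  | nil => simpa using hp
  | cons T l ih =>
    have h1 : (T :: l).prod p = T (l.prod p) := by
      rw [List.prod_cons, Module.End.mul_apply]
    rw [h1]
    have h2 := step n m₁ m₂ hn (k + l.length) T (hl T (by simp)) _
      (ih (fun U hU => hl U (by simp [hU])))
    have h3 : k + l.length + 1 = k + (T :: l).length := by simp; omega
    rw [← h3]
    exact h2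

noncomputable def d0 (n m₁ m₂ : ℕ) (hn : 2 ≤ n) : (Fin n ⊕ Fin n) →₀ ℕ :=
  Finsupp.single (Sum.inl (⟨n - 2, by omega⟩ : Fin n)) m₁ +
    Finsupp.single (Sum.inr (⟨n - 1, by omega⟩ : Fin n)) m₂

lemma v_eq (n m₁ m₂ : ℕ) (hn : 2 ≤ n) :
    (X (Sum.inl (⟨n - 2, by omega⟩ : Fin n)) ^ m₁ *
      X (Sum.inr (⟨n - 1, by omega⟩ : Fin n)) ^ m₂ : PR n) = monomial (d0 n m₁ m₂ hn) 1 := by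
  rw [X_pow_eq_monomial, X_pow_eq_monomial, monomial_mul, one_mul, d0]

lemma good_d0 (n m₁ m₂ : ℕ) (hn : 2 ≤ n) : Good n m₁ m₂ hn 0 (d0 n m₁ m₂ hn) := by
  have hne : Sum.inl (α := Fin n) (β := Fin n) (⟨n - 2, by omega⟩ : Fin n)
      ≠ Sum.inl (lastI n hn) := by
    simp only [ne_eq, Sum.inl.injEq, lastI, Fin.mk.injEq]
    omega
  have hval : (d0 n m₁ m₂ hn) (Sum.inl (lastI n hn)) = 0 := by
    rw [d0, Finsupp.add_apply, Finsupp.single_eq_of_ne' hne,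
      Finsupp.single_eq_of_ne' (by simp)]
    omega
  refine ⟨?_, ?_, ?_⟩
  · rw [d0, yd_add, yd_single_inl, yd_single_inr]; omega
  · rw [hval, d0, xs_add, xs_single_inl, xs_single_inr]
    rw [if_pos (by simp; omega)]
  · rw [hval]

lemma Wk_le_GV (n m₁ m₂ : ℕ) (hn : 2 ≤ n) (k : ℕ) :
    Wk n (Sset n hn) (monomial (d0 n m₁ m₂ hn) 1) k ≤ GV n m₁ m₂ hn k := by
  rw [Wk, Submodule.span_le]
  rintro p ⟨l, hlen, hS, rfl⟩
  have h1 := gen_mem n m₁ m₂ hn l hS 0 _ (mono_mem (good_d0 n m₁ m₂ hn) 1)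
  have := GV_mono n m₁ m₂ hn (show 0 + l.length ≤ k by omega) h1
  simpa [MvPolynomial.smul_monomial] using this


lemma good_inj (n m₁ m₂ k : ℕ) (hn : 2 ≤ n) (d e : (Fin n ⊕ Fin n) →₀ ℕ)
    (hd : Good n m₁ m₂ hn k d) (he : Good n m₁ m₂ hn k e)
    (hinl : ∀ j : Fin n, (j : ℕ) < n - 1 → d (Sum.inl j) = e (Sum.inl j))
    (hinr : ∀ j : Fin n, d (Sum.inr j) = e (Sum.inr j)) : d = e := by
  have hxs : xs n d = xs n e := by
    apply Finset.sum_congr rfl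
    intro i hi
    simp only [Finset.mem_filter, Finset.mem_univ, true_and] at hi
    exact hinl i hi
  have hlv : d (Sum.inl (lastI n hn)) = e (Sum.inl (lastI n hn)) := by
    have h1 := hd.2.1; have h2 := he.2.1
    omega
  ext a
  rcases a with j | j
  · by_cases hj : (j : ℕ) < n - 1
    · exact hinl j hj
    · have : j = lastI n hn := by
        apply Fin.ext
        have := j.isLt
        simp only [lastI]
        omega
      rw [this]; exact hlv
  · exact hinr j

lemma finrank_GV_le (n m₁ m₂ k : ℕ) (hn : 2 ≤ n) :
    Module.finrank ℝ (GV n m₁ m₂ hn k) ≤ (m₁ + k + 1) ^ (n - 1) * (m₂ + 1) ^ n := by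
  classical
  set G : Set ((Fin n ⊕ Fin n) →₀ ℕ) := {d | Good n m₁ m₂ hn k d} with hG
  -- the injection
  have hbound : ∀ d ∈ G, (∀ j : Fin n, (j : ℕ) < n - 1 → d (Sum.inl j) < m₁ + k + 1) ∧
      (∀ j : Fin n, d (Sum.inr j) < m₂ + 1) := by
    intro d hd
    obtain ⟨h1, h2, h3⟩ := hd
    constructor
    · intro j hj
      have := coord_le_xs n d j hj
      omega
    · intro j
      have := coord_le_yd n d j
      omega
  let Φ : G → (Fin (n - 1) → Fin (m₁ + k + 1)) × (Fin n → Fin (m₂ + 1)) :=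
    fun d => (fun i => ⟨d.1 (Sum.inl (Fin.castLE (by omega) i)),
        (hbound d.1 d.2).1 _ (by simpa using i.isLt)⟩,
      fun i => ⟨d.1 (Sum.inr i), (hbound d.1 d.2).2 i⟩)
  have hΦ : Function.Injective Φ := by
    rintro ⟨d, hd⟩ ⟨e, he⟩ hde
    have h1 := congrArg Prod.fst hde
    have h2 := congrArg Prod.snd hde
    simp only [Φ] at h1 h2
    apply Subtype.ext
    apply good_inj n m₁ m₂ k hn d e hd he
    · intro j hj
      have := congrFun h1 ⟨(j : ℕ), hj⟩
      have hcast : Fin.castLE (show n - 1 ≤ n by omega) (⟨(j : ℕ), hj⟩ : Fin (n - 1)) = j :=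
        Fin.ext rfl
      rw [← hcast]
      exact congrArg Fin.val this
    · intro j
      have := congrFun h2 j
      exact congrArg Fin.val this
  have hfin : Finite G := Finite.of_injective Φ hΦ
  have hGfin : G.Finite := Set.finite_coe_iff.mp hfin
  haveI := hGfin.fintype
  have hset : {p : PR n | ∃ d, Good n m₁ m₂ hn k d ∧ p = monomial d 1}
      = ↑(G.toFinset.image (fun d => (monomial d (1 : ℝ)))) := by
    ext p
    simp only [Set.mem_setOf_eq, Finset.coe_image, Set.coe_toFinset, Set.mem_image, hG]
    constructor
    · rintro ⟨d, hd, rfl⟩; exact ⟨d, hd, rfl⟩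
    · rintro ⟨d, hd, rfl⟩; exact ⟨d, hd, rfl⟩
  have h1 : Module.finrank ℝ (GV n m₁ m₂ hn k)
      ≤ (G.toFinset.image (fun d => (monomial d (1 : ℝ)))).card := by
    rw [GV, hset]
    exact finrank_span_finset_le_card _
  have h2 : (G.toFinset.image (fun d => (monomial d (1 : ℝ)))).card ≤ G.toFinset.card :=
    Finset.card_image_le
  have h3 : G.toFinset.card = Fintype.card G := Set.toFinset_card G
  have h4 : Fintype.card G ≤ Fintype.card
      ((Fin (n - 1) → Fin (m₁ + k + 1)) × (Fin n → Fin (m₂ + 1))) :=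
    Fintype.card_le_of_injective Φ hΦ
  have h5 : Fintype.card ((Fin (n - 1) → Fin (m₁ + k + 1)) × (Fin n → Fin (m₂ + 1)))
      = (m₁ + k + 1) ^ (n - 1) * (m₂ + 1) ^ n := by
    simp [Fintype.card_prod, Fintype.card_fun]
  omega


noncomputable def Bop (n : ℕ) (hn : 2 ≤ n) (i : Fin n) : Module.End ℝ (PR n) :=
  -mulE (X (Sum.inl i) * X (Sum.inl (⟨n - 1, by omega⟩ : Fin n)))
    - mulE (X (Sum.inr i)) * pdE (Sum.inr (⟨n - 1, by omega⟩ : Fin n))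

lemma Bop_mem (n : ℕ) (hn : 2 ≤ n) (i : Fin n) (hi : (i : ℕ) < n - 1) :
    Bop n hn i ∈ Sset n hn := Or.inr ⟨i, hi, rfl⟩

def Bad (n : ℕ) (e : (Fin n ⊕ Fin n) →₀ ℕ) : Prop :=
  ∃ i : Fin n, (i : ℕ) < n - 1 ∧ e (Sum.inr i) ≠ 0

noncomputable def Rbad (n : ℕ) : Submodule ℝ (PR n) :=
  Submodule.span ℝ {p | ∃ e, Bad n e ∧ p = monomial e 1}

lemma bad_mono_mem {n : ℕ} {e : (Fin n ⊕ Fin n) →₀ ℕ} (h : Bad n e) (c : ℝ) :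
    monomial e c ∈ Rbad n := by
  have h1 : monomial e (1 : ℝ) ∈ Rbad n := Submodule.subset_span ⟨e, h, rfl⟩
  have := (Rbad n).smul_mem c h1
  simpa [MvPolynomial.smul_monomial] using this

lemma ymul_bad {n : ℕ} (i : Fin n) (hi : (i : ℕ) < n - 1) (q : PR n) :
    X (Sum.inr i) * q ∈ Rbad n := by
  induction q using MvPolynomial.induction_on' with
  | monomial d c =>
    rw [X_mul_mono]
    exact bad_mono_mem ⟨i, hi, by simp⟩ c
  | add p q hp hq => rw [mul_add]; exact Submodule.add_mem _ hp hq

lemma xmul_bad {n : ℕ} (j : Fin n) (q : PR n) (hq : q ∈ Rbad n) :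
    X (Sum.inl j) * q ∈ Rbad n := by
  induction hq using Submodule.span_induction with
  | mem p hp =>
    obtain ⟨e, ⟨i, hi, hne⟩, rfl⟩ := hp
    rw [X_mul_mono]
    refine bad_mono_mem ⟨i, hi, ?_⟩ 1
    simpa using hne
  | zero => simp
  | add x y hx hy ihx ihy => rw [mul_add]; exact Submodule.add_mem _ ihx ihy
  | smul c x hx ihx => rw [mul_smul_comm]; exact Submodule.smul_mem _ c ihx

lemma Bop_apply (n : ℕ) (hn : 2 ≤ n) (i : Fin n) (q : PR n) :
    Bop n hn i q = -(X (Sum.inl i) * (X (Sum.inl (lastI n hn)) * q))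
      - X (Sum.inr i) * pderiv (Sum.inr (lastI n hn)) q := by
  simp [Bop, mulE, pdE, Module.End.mul_apply, lastI, mul_assoc]

lemma Bop_bad {n : ℕ} (hn : 2 ≤ n) (i : Fin n) (hi : (i : ℕ) < n - 1) (r : PR n)
    (hr : r ∈ Rbad n) : Bop n hn i r ∈ Rbad n := by
  rw [Bop_apply]
  exact Submodule.sub_mem _
    (Submodule.neg_mem _ (xmul_bad _ _ (xmul_bad _ _ hr))) (ymul_bad i hi _)

noncomputable def efn (n : ℕ) (hn : 2 ≤ n) (i : Fin n) : (Fin n ⊕ Fin n) →₀ ℕ :=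
  Finsupp.single (Sum.inl i) 1 + Finsupp.single (Sum.inl (lastI n hn)) 1

lemma Bop_mono {n : ℕ} (hn : 2 ≤ n) (i : Fin n) (hi : (i : ℕ) < n - 1)
    (d : (Fin n ⊕ Fin n) →₀ ℕ) :
    ∃ r ∈ Rbad n, Bop n hn i (monomial d 1)
      = -monomial (efn n hn i + d) 1 + r := by
  refine ⟨-(X (Sum.inr i) * pderiv (Sum.inr (lastI n hn)) (monomial d 1)),
    Submodule.neg_mem _ (ymul_bad i hi _), ?_⟩
  rw [Bop_apply, X_mul_mono, X_mul_mono, efn, add_assoc]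
  ring

lemma key (n : ℕ) (hn : 2 ≤ n) (l : List (Fin n)) (hl : ∀ i ∈ l, (i : ℕ) < n - 1)
    (d : (Fin n ⊕ Fin n) →₀ ℕ) :
    ∃ r ∈ Rbad n, (l.map (Bop n hn)).prod (monomial d 1)
      = (-1 : ℝ) ^ l.length • monomial (d + (l.map (efn n hn)).sum) 1 + r := by
  induction l with
  | nil => exact ⟨0, Submodule.zero_mem _, by simp⟩
  | cons i l ih =>
    obtain ⟨r, hr, hres⟩ := ih (fun j hj => hl j (by simp [hj]))
    obtain ⟨r2, hr2, hmono⟩ := Bop_mono hn i (hl i (by simp)) (d + (l.map (efn n hn)).sum)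
    refine ⟨(-1 : ℝ) ^ l.length • r2 + Bop n hn i r,
      Submodule.add_mem _ (Submodule.smul_mem _ _ hr2)
        (Bop_bad hn i (hl i (by simp)) r hr), ?_⟩
    have hstep : ((i :: l).map (Bop n hn)).prod (monomial d 1)
        = Bop n hn i ((l.map (Bop n hn)).prod (monomial d 1)) := by
      rw [List.map_cons, List.prod_cons, Module.End.mul_apply]
    rw [hstep, hres, map_add, map_smul, hmono]
    have hexp : efn n hn i + (d + (l.map (efn n hn)).sum)
        = d + ((i :: l).map (efn n hn)).sum := by
      rw [List.map_cons, List.sum_cons]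
      abel
    rw [hexp]
    simp only [List.length_cons, pow_succ, smul_add, smul_neg, mul_smul]
    abel_nf
    simp [neg_smul]
    abel


def lof {n m : ℕ} (a : Fin m → ℕ) (g : Fin m → Fin n) : List (Fin n) :=
  (List.finRange m).flatMap (fun j => List.replicate (a j) (g j))

lemma lof_length {n m : ℕ} (a : Fin m → ℕ) (g : Fin m → Fin n) :
    (lof a g).length = ∑ j, a j := by
  rw [lof, List.length_flatMap, Fin.sum_univ_def]
  congr 1
  apply List.map_congr_left
  intro j _
  exact List.length_replicate

lemma lof_mem {n m : ℕ} (a : Fin m → ℕ) (g : Fin m → Fin n) (i : Fin n)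
    (hi : i ∈ lof a g) : ∃ j, i = g j := by
  simp only [lof, List.mem_flatMap, List.mem_replicate] at hi
  obtain ⟨j, _, _, rfl⟩ := hi
  exact ⟨j, rfl⟩

lemma lof_map_sum {n m : ℕ} {M : Type} [AddCommMonoid M] (a : Fin m → ℕ)
    (g : Fin m → Fin n) (f : Fin n → M) :
    ((lof a g).map f).sum = ∑ j, a j • f (g j) := by
  rw [lof, List.map_flatMap, List.flatMap_def, List.sum_flatten, List.map_map,
    Fin.sum_univ_def]
  congr 1
  apply List.map_congr_left
  intro j _
  simp [List.map_replicate, List.sum_replicate]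

def cst (n : ℕ) (hn : 2 ≤ n) (j : Fin (n - 1)) : Fin n := Fin.castLE (by omega) j

noncomputable def Efn (n : ℕ) (hn : 2 ≤ n) (a : Fin (n - 1) → ℕ) : (Fin n ⊕ Fin n) →₀ ℕ :=
  ∑ j, a j • efn n hn (cst n hn j)

noncomputable def mu (n m₁ m₂ : ℕ) (hn : 2 ≤ n) (a : Fin (n - 1) → ℕ) :
    (Fin n ⊕ Fin n) →₀ ℕ := d0 n m₁ m₂ hn + Efn n hn a

lemma efn_inr (n : ℕ) (hn : 2 ≤ n) (i j : Fin n) : efn n hn i (Sum.inr j) = 0 := by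
  simp [efn, Finsupp.add_apply, Finsupp.single_apply]

lemma Efn_inr (n : ℕ) (hn : 2 ≤ n) (a : Fin (n - 1) → ℕ) (j : Fin n) :
    Efn n hn a (Sum.inr j) = 0 := by
  rw [Efn, Finsupp.finset_sum_apply]
  apply Finset.sum_eq_zero
  intro i _
  rw [Finsupp.smul_apply, efn_inr, smul_zero]

lemma mu_not_bad (n m₁ m₂ : ℕ) (hn : 2 ≤ n) (a : Fin (n - 1) → ℕ) :
    ¬ Bad n (mu n m₁ m₂ hn a) := by
  rintro ⟨i, hi, hne⟩
  apply hne
  have hne2 : (Sum.inr (α := Fin n) (β := Fin n) (⟨n - 1, by omega⟩ : Fin n))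
      ≠ Sum.inr i := by
    simp only [ne_eq, Sum.inr.injEq, Fin.ext_iff]
    omega
  rw [mu, Finsupp.add_apply, Efn_inr, d0, Finsupp.add_apply,
    Finsupp.single_eq_of_ne' (by simp), Finsupp.single_eq_of_ne' hne2]
  rfl

lemma efn_coord (n : ℕ) (hn : 2 ≤ n) (j j₀ : Fin (n - 1)) :
    efn n hn (cst n hn j) (Sum.inl (cst n hn j₀)) = if j = j₀ then 1 else 0 := by
  rw [efn, Finsupp.add_apply, Finsupp.single_apply, Finsupp.single_apply]
  have h1 : Sum.inl (α := Fin n) (β := Fin n) (lastI n hn) ≠ Sum.inl (cst n hn j₀) := by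
    simp only [ne_eq, Sum.inl.injEq, lastI, cst, Fin.ext_iff, Fin.coe_castLE]
    have := j₀.isLt
    omega
  rw [if_neg h1]
  have h2 : (Sum.inl (α := Fin n) (β := Fin n) (cst n hn j) = Sum.inl (cst n hn j₀))
      ↔ j = j₀ := by
    simp only [Sum.inl.injEq, cst, Fin.ext_iff, Fin.coe_castLE]
  by_cases h : j = j₀
  · rw [if_pos (h2.mpr h), if_pos h]
    rfl
  · rw [if_neg (fun hh => h (h2.mp hh)), if_neg h]
    rfl

lemma Efn_coord (n : ℕ) (hn : 2 ≤ n) (a : Fin (n - 1) → ℕ) (j₀ : Fin (n - 1)) :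
    Efn n hn a (Sum.inl (cst n hn j₀)) = a j₀ := by
  rw [Efn, Finsupp.finset_sum_apply]
  have h1 : ∀ j ∈ Finset.univ, (a j • efn n hn (cst n hn j)) (Sum.inl (cst n hn j₀))
      = if j = j₀ then a j else 0 := by
    intro j _
    rw [Finsupp.smul_apply, efn_coord]
    by_cases h : j = j₀ <;> simp [h]
  rw [Finset.sum_congr rfl h1, Finset.sum_ite_eq' Finset.univ j₀ (fun j => a j)]
  simp

lemma mu_inj (n m₁ m₂ : ℕ) (hn : 2 ≤ n) (a b : Fin (n - 1) → ℕ)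
    (h : mu n m₁ m₂ hn a = mu n m₁ m₂ hn b) : a = b := by
  funext j
  have := congrArg (fun d => d (Sum.inl (cst n hn j))) h
  simp only [mu, Finsupp.add_apply, Efn_coord] at this
  omega

lemma coeff_vanish {n : ℕ} (m : (Fin n ⊕ Fin n) →₀ ℕ) (hm : ¬ Bad n m) (r : PR n)
    (hr : r ∈ Rbad n) : coeff m r = 0 := by
  induction hr using Submodule.span_induction with
  | mem p hp =>
    obtain ⟨e, he, rfl⟩ := hp
    rw [coeff_monomial, if_neg]
    intro h
    exact hm (h ▸ he)
  | zero => simp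
  | add x y hx hy ihx ihy => rw [coeff_add, ihx, ihy]; ring
  | smul c x hx ihx => rw [coeff_smul, ihx, smul_zero]


lemma good_finite (n m₁ m₂ k : ℕ) (hn : 2 ≤ n) :
    {d : (Fin n ⊕ Fin n) →₀ ℕ | Good n m₁ m₂ hn k d}.Finite := by
  classical
  set G : Set ((Fin n ⊕ Fin n) →₀ ℕ) := {d | Good n m₁ m₂ hn k d} with hG
  have hbound : ∀ d ∈ G, (∀ j : Fin n, (j : ℕ) < n - 1 → d (Sum.inl j) < m₁ + k + 1) ∧
      (∀ j : Fin n, d (Sum.inr j) < m₂ + 1) := by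
    intro d hd
    obtain ⟨h1, h2, h3⟩ := hd
    constructor
    · intro j hj
      have := coord_le_xs n d j hj
      omega
    · intro j
      have := coord_le_yd n d j
      omega
  let Φ : G → (Fin (n - 1) → Fin (m₁ + k + 1)) × (Fin n → Fin (m₂ + 1)) :=
    fun d => (fun i => ⟨d.1 (Sum.inl (Fin.castLE (by omega) i)),
        (hbound d.1 d.2).1 _ (by simpa using i.isLt)⟩,
      fun i => ⟨d.1 (Sum.inr i), (hbound d.1 d.2).2 i⟩)
  have hΦ : Function.Injective Φ := by
    rintro ⟨d, hd⟩ ⟨e, he⟩ hde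
    have h1 := congrArg Prod.fst hde
    have h2 := congrArg Prod.snd hde
    simp only [Φ] at h1 h2
    apply Subtype.ext
    apply good_inj n m₁ m₂ k hn d e hd he
    · intro j hj
      have := congrFun h1 ⟨(j : ℕ), hj⟩
      have hcast : Fin.castLE (show n - 1 ≤ n by omega) (⟨(j : ℕ), hj⟩ : Fin (n - 1)) = j :=
        Fin.ext rfl
      rw [← hcast]
      exact congrArg Fin.val this
    · intro j
      have := congrFun h2 j
      exact congrArg Fin.val this
  have hfin : Finite G := Finite.of_injective Φ hΦ
  exact Set.finite_coe_iff.mp hfin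

lemma GV_fd (n m₁ m₂ k : ℕ) (hn : 2 ≤ n) :
    FiniteDimensional ℝ (GV n m₁ m₂ hn k) := by
  have hfin : ({p : PR n | ∃ d, Good n m₁ m₂ hn k d ∧ p = monomial d 1}).Finite := by
    apply Set.Finite.subset ((good_finite n m₁ m₂ k hn).image (fun d => monomial d (1 : ℝ)))
    rintro p ⟨d, hd, rfl⟩
    exact ⟨d, hd, rfl⟩
  exact FiniteDimensional.span_of_finite ℝ hfin

lemma Wk_fd (n m₁ m₂ k : ℕ) (hn : 2 ≤ n) :
    FiniteDimensional ℝ (Wk n (Sset n hn) (monomial (d0 n m₁ m₂ hn) 1) k) := by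
  haveI := GV_fd n m₁ m₂ k hn
  exact Submodule.finiteDimensional_of_le (Wk_le_GV n m₁ m₂ hn k)

lemma lower (n m₁ m₂ : ℕ) (hn : 2 ≤ n) (k t : ℕ) (ht : (n - 1) * t ≤ k) :
    t ^ (n - 1) ≤ Module.finrank ℝ
      (Wk n (Sset n hn) (monomial (d0 n m₁ m₂ hn) 1) k) := by
  classical
  haveI := Wk_fd n m₁ m₂ k hn
  set W := Wk n (Sset n hn) (monomial (d0 n m₁ m₂ hn) 1) k with hW
  let g : (Fin (n - 1) → Fin t) → PR n := fun a =>
    ((lof (fun j => ((a j : ℕ))) (cst n hn)).map (Bop n hn)).prod (monomial (d0 n m₁ m₂ hn) 1)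
  have hlofmem : ∀ (a : Fin (n - 1) → Fin t) (i : Fin n),
      i ∈ lof (fun j => ((a j : ℕ))) (cst n hn) → (i : ℕ) < n - 1 := by
    intro a i hi
    obtain ⟨j, rfl⟩ := lof_mem _ _ _ hi
    simpa [cst] using j.isLt
  have hkey : ∀ a : Fin (n - 1) → Fin t, ∃ r ∈ Rbad n,
      g a = (-1 : ℝ) ^ (∑ j, ((a j : ℕ))) •
        monomial (mu n m₁ m₂ hn (fun j => ((a j : ℕ)))) 1 + r := by
    intro a
    obtain ⟨r, hr, hres⟩ := key n hn (lof (fun j => ((a j : ℕ))) (cst n hn))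
      (hlofmem a) (d0 n m₁ m₂ hn)
    refine ⟨r, hr, ?_⟩
    show (List.map (Bop n hn) (lof (fun j => ((a j : ℕ))) (cst n hn))).prod
        (monomial (d0 n m₁ m₂ hn) 1) = _
    rw [hres, lof_length, lof_map_sum]
    rfl
  have hcoeff : ∀ a b : Fin (n - 1) → Fin t,
      coeff (mu n m₁ m₂ hn (fun j => ((b j : ℕ)))) (g a)
        = (-1 : ℝ) ^ (∑ j, ((a j : ℕ))) * (if a = b then 1 else 0) := by
    intro a b
    obtain ⟨r, hr, hres⟩ := hkey a
    rw [hres, coeff_add, coeff_smul,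
      coeff_vanish _ (mu_not_bad n m₁ m₂ hn _) r hr, coeff_monomial]
    have hiff : (mu n m₁ m₂ hn (fun j => ((a j : ℕ)))
        = mu n m₁ m₂ hn (fun j => ((b j : ℕ)))) ↔ a = b := by
      constructor
      · intro h
        have := mu_inj n m₁ m₂ hn _ _ h
        funext j
        exact Fin.ext (congrFun this j)
      · intro h; rw [h]
    by_cases h : a = b
    · rw [if_pos (hiff.mpr h), if_pos h]
      simp
    · rw [if_neg (fun hh => h (hiff.mp hh)), if_neg h]
      simp
  have hmem : ∀ a : Fin (n - 1) → Fin t, g a ∈ W := by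
    intro a
    apply Submodule.subset_span
    refine ⟨(lof (fun j => ((a j : ℕ))) (cst n hn)).map (Bop n hn), ?_, ?_, rfl⟩
    · rw [List.length_map, lof_length]
      have h1 : ∑ j, ((a j : ℕ)) ≤ (n - 1) * t := by
        calc ∑ j : Fin (n - 1), ((a j : ℕ)) ≤ ∑ _j : Fin (n - 1), t :=
              Finset.sum_le_sum (fun j _ => le_of_lt (a j).isLt)
          _ = (n - 1) * t := by rw [Finset.sum_const, Finset.card_univ, Fintype.card_fin,
              smul_eq_mul]
      omega
    · intro T hT
      rw [List.mem_map] at hT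
      obtain ⟨i, hi, rfl⟩ := hT
      exact Bop_mem n hn i (hlofmem a i hi)
  have hli : LinearIndependent ℝ g := by
    rw [linearIndependent_iff']
    intro s c hsum a ha
    have h0 := congrArg (coeff (mu n m₁ m₂ hn (fun j => ((a j : ℕ))))) hsum
    rw [coeff_zero] at h0
    have hsum2 : ∑ b ∈ s, c b * coeff (mu n m₁ m₂ hn (fun j => ((a j : ℕ)))) (g b) = 0 := by
      rw [← h0]
      rw [MvPolynomial.coeff_sum]
      apply Finset.sum_congr rfl
      intro b _
      rw [MvPolynomial.coeff_smul, smul_eq_mul]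
    rw [Finset.sum_eq_single_of_mem a ha ?side] at hsum2
    · rw [hcoeff a a, if_pos rfl, mul_one] at hsum2
      have : ((-1 : ℝ) ^ (∑ j, ((a j : ℕ)))) ≠ 0 := by
        apply pow_ne_zero; norm_num
      rcases mul_eq_zero.mp hsum2 with h | h
      · exact h
      · exact absurd h this
    case side =>
      intro b _ hba
      rw [hcoeff b a, if_neg hba, mul_zero, mul_zero]
  let g' : (Fin (n - 1) → Fin t) → W := fun a => ⟨g a, hmem a⟩
  have hli' : LinearIndependent ℝ g' := by
    apply LinearIndependent.of_comp W.subtype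
    convert hli
    rfl
  have := hli'.fintype_card_le_finrank
  rwa [Fintype.card_fun, Fintype.card_fin, Fintype.card_fin] at this


end Stmt12

open Stmt12

/-- v = x_{n−1}^{m₁} yₙ^{m₂} (0-based: x-index n−2, y-index n−1). -/
theorem stmt_12 (n m₁ m₂ : ℕ) (hn : 2 ≤ n) (hm : m₂ ≤ m₁) :
    ∃ c₁ c₂ : ℝ, 0 < c₁ ∧ 0 < c₂ ∧ ∃ K : ℕ, ∀ k ≥ K,
      c₁ * (k : ℝ) ^ (n - 1) ≤
        (Module.finrank ℝ (Wk n (Sset n hn)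
          (X (Sum.inl (⟨n - 2, by omega⟩ : Fin n)) ^ m₁ *
            X (Sum.inr (⟨n - 1, by omega⟩ : Fin n)) ^ m₂) k) : ℝ) ∧
      (Module.finrank ℝ (Wk n (Sset n hn)
          (X (Sum.inl (⟨n - 2, by omega⟩ : Fin n)) ^ m₁ *
            X (Sum.inr (⟨n - 1, by omega⟩ : Fin n)) ^ m₂) k) : ℝ) ≤
        c₂ * (k : ℝ) ^ (n - 1) := by

  have hv := v_eq n m₁ m₂ hn
  rw [hv]
  have hn1 : (0 : ℝ) < 2 * (n - 1 : ℕ) := by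
    have : 1 ≤ n - 1 := by omega
    positivity
  refine ⟨(1 / (2 * ((n : ℝ) - 1)))^(n - 1), 2^(n-1) * ((m₂ : ℝ) + 1)^n, ?_, ?_, 2*n + m₁ + 2, ?_⟩
  · have h1 : (0 : ℝ) < (n : ℝ) - 1 := by
      have : 2 ≤ (n : ℝ) := by exact_mod_cast hn
      linarith
    positivity
  · positivity
  intro k hk
  haveI := Wk_fd n m₁ m₂ k hn
  haveI := GV_fd n m₁ m₂ k hn
  have hcast : ((n : ℝ) - 1) = ((n - 1 : ℕ) : ℝ) := by
    have : 1 ≤ n := by omega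
    push_cast [this]
    ring
  have hpos2 : (0 : ℝ) < 2 * ((n : ℝ) - 1) := by rw [hcast]; exact_mod_cast hn1
  constructor
  · -- lower bound
    obtain ⟨t, ht, htk⟩ : ∃ t, (n - 1) * t ≤ k ∧ k ≤ 2 * ((n - 1) * t) := by
      refine ⟨k / (n - 1), ?_, ?_⟩
      · rw [mul_comm]
        exact Nat.div_mul_le_self k (n - 1)
      · have hmod := Nat.div_add_mod k (n - 1)
        have hr : k % (n - 1) < n - 1 := Nat.mod_lt _ (by omega)
        generalize hgen : (n - 1) * (k / (n - 1)) = A at hmod ⊢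
        omega
    have hlow := lower n m₁ m₂ hn k t ht
    have hk2 : (k : ℝ) ≤ 2 * ((n : ℝ) - 1) * t := by
      calc (k : ℝ) ≤ ((2 * ((n - 1) * t) : ℕ) : ℝ) := by exact_mod_cast htk
        _ = 2 * ((n : ℝ) - 1) * t := by rw [hcast]; push_cast; ring
    calc (1 / (2 * ((n : ℝ) - 1)))^(n - 1) * (k : ℝ) ^ (n - 1)
        = ((k : ℝ) / (2 * ((n : ℝ) - 1))) ^ (n - 1) := by
          rw [← mul_pow]; ring_nf
      _ ≤ ((t : ℕ) : ℝ) ^ (n - 1) := by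
          apply pow_le_pow_left₀
          · exact div_nonneg (by positivity) (le_of_lt hpos2)
          · rw [div_le_iff₀ hpos2]
            calc (k : ℝ) ≤ 2 * ((n : ℝ) - 1) * t := hk2
              _ = (t : ℝ) * (2 * ((n : ℝ) - 1)) := by ring
      _ = ((t ^ (n - 1) : ℕ) : ℝ) := by push_cast; ring
      _ ≤ _ := by exact_mod_cast hlow
  · -- upper bound
    have hup : Module.finrank ℝ (Wk n (Sset n hn) (monomial (d0 n m₁ m₂ hn) 1) k)
        ≤ (m₁ + k + 1) ^ (n - 1) * (m₂ + 1) ^ n := by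
      calc Module.finrank ℝ (Wk n (Sset n hn) (monomial (d0 n m₁ m₂ hn) 1) k)
          ≤ Module.finrank ℝ (GV n m₁ m₂ hn k) :=
            Submodule.finrank_mono (Wk_le_GV n m₁ m₂ hn k)
        _ ≤ (m₁ + k + 1) ^ (n - 1) * (m₂ + 1) ^ n := finrank_GV_le n m₁ m₂ k hn
    calc (Module.finrank ℝ (Wk n (Sset n hn) (monomial (d0 n m₁ m₂ hn) 1) k) : ℝ)
        ≤ (((m₁ + k + 1) ^ (n - 1) * (m₂ + 1) ^ n : ℕ) : ℝ) := by exact_mod_cast hup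
      _ = ((m₁ + k + 1 : ℕ) : ℝ) ^ (n - 1) * ((m₂ : ℝ) + 1) ^ n := by push_cast; ring
      _ ≤ (2 * (k : ℝ)) ^ (n - 1) * ((m₂ : ℝ) + 1) ^ n := by
          apply mul_le_mul_of_nonneg_right _ (by positivity)
          apply pow_le_pow_left₀ (by positivity)
          push_cast
          have : m₁ + 1 ≤ k := by omega
          have : ((m₁ : ℝ)) + 1 ≤ (k : ℝ) := by exact_mod_cast this
          linarith
      _ = 2^(n-1) * ((m₂ : ℝ) + 1)^n * (k : ℝ) ^ (n - 1) := by rw [mul_pow]; ring
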